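/- Let R be a ring and e, f ∈ R with eR(1-e) ⊆ J(R) and fR(1-f) ⊆ J(R). Set g = e + f - ef. Then gR(1-g) ⊆ J(R), and for every maximal ideal P of R, g ∈ P if and only if e ∈ P and f ∈ P. -/

import Mathlib

def IsMaxTwoSided {R : Type*} [Ring R] (P : TwoSidedIdeal R) : Prop :=
  P ≠ ⊤ ∧ ∀ Q : TwoSidedIdeal R, P < Q → Q = ⊤

def InJac {R : Type*} [Ring R] (x : R) : Prop := x ∈ Ideal.jacobson (⊥ : Ideal R)

def IsFullElem {R : Type*} [Ring R] (u : R) : Prop := TwoSidedIdeal.span ({u} : Set R) = ⊤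

def FecklyCleanElem {R : Type*} [Ring R] (a : R) : Prop :=
  ∃ e u : R, a = e + u ∧ IsFullElem u ∧ ∀ r : R, InJac (e * r * (1 - e))

def FecklyCleanRing (R : Type*) [Ring R] : Prop := ∀ a : R, FecklyCleanElem a

lemma InJac.mul_left {R : Type*} [Ring R] {x : R} (hx : InJac x) (c : R) : InJac (c * x) := by
  have := Submodule.smul_mem (Ideal.jacobson (⊥ : Ideal R)) c hx
  simpa [smul_eq_mul, InJac] using this

lemma InJac.mul_right {R : Type*} [Ring R] {x : R} (hx : InJac x) (c : R) : InJac (x * c) := by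
  exact (Ideal.jacobson (⊥ : Ideal R)).mul_mem_right c hx

lemma InJac.add {R : Type*} [Ring R] {x y : R} (hx : InJac x) (hy : InJac y) :
    InJac (x + y) := add_mem hx hy

lemma isUnit_one_sub_jac {R : Type*} [Ring R] {z : R} (hz : InJac z) : IsUnit (1 - z) := by
  have h0 : (1 - z) - 1 ∈ Ideal.jacobson (⊥ : Ideal R) := by
    simpa using (neg_mem hz : InJac (-z))
  obtain ⟨s, hs⟩ := Ideal.exists_mul_sub_mem_of_sub_one_mem_jacobson (1 - z) h0
  rw [Ideal.mem_bot, sub_eq_zero] at hs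
  have hs1 : s - 1 ∈ Ideal.jacobson (⊥ : Ideal R) := by
    have h2 : s - s * z = 1 := by rw [← hs]; noncomm_ring
    have h3 : s - 1 = s * z := by
      calc s - 1 = s - (s - s * z) := by rw [h2]
        _ = s * z := by abel
    rw [h3]; exact InJac.mul_left hz s
  obtain ⟨t, ht⟩ := Ideal.exists_mul_sub_mem_of_sub_one_mem_jacobson s hs1
  rw [Ideal.mem_bot, sub_eq_zero] at ht
  have hts : t = 1 - z := by
    calc t = t * (s * (1 - z)) := by rw [hs, mul_one]
      _ = (t * s) * (1 - z) := by rw [mul_assoc]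
      _ = 1 - z := by rw [ht, one_mul]
  exact ⟨⟨1 - z, s, hts ▸ ht, hs⟩, rfl⟩

/-- The Jacobson radical as a two-sided ideal. -/
def jacTSI (R : Type*) [Ring R] : TwoSidedIdeal R :=
  TwoSidedIdeal.mk' {x | InJac x} (show InJac 0 from zero_mem _)
    (fun {x y} h1 h2 => show InJac (x + y) from add_mem h1 h2)
    (fun {x} h => show InJac (-x) from neg_mem h) (fun h => h.mul_left _)
    (fun h => h.mul_right _)

lemma mem_jacTSI {R : Type*} [Ring R] {x : R} : x ∈ jacTSI R ↔ InJac x := by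
  unfold jacTSI
  rw [TwoSidedIdeal.mem_mk']
  rfl

lemma jac_le_max {R : Type*} [Ring R] {P : TwoSidedIdeal R} (hP : IsMaxTwoSided P)
    {x : R} (hx : InJac x) : x ∈ P := by
  by_contra hxP
  have hlt : P < P ⊔ jacTSI R := by
    refine lt_of_le_of_ne le_sup_left (fun h => hxP ?_)
    rw [h]; exact TwoSidedIdeal.mem_sup_right (mem_jacTSI.mpr hx)
  have htop := hP.2 _ hlt
  have h1 : (1 : R) ∈ P ⊔ jacTSI R := htop ▸ TwoSidedIdeal.mem_top R
  obtain ⟨y, hy, z, hz, hyz⟩ := TwoSidedIdeal.mem_sup.mp h1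
  have hu : IsUnit y := by
    have hy1 : y = 1 - z := by rw [← hyz]; abel
    rw [hy1]
    exact isUnit_one_sub_jac (mem_jacTSI.mp hz)
  obtain ⟨u, hu⟩ := hu
  have h1' : (1 : R) = ↑u⁻¹ * y := by rw [← hu]; exact u.inv_mul.symm
  exact hP.1 (P.eq_top (h1' ▸ P.mul_mem_left _ _ hy))

theorem stmt3 {R : Type*} [Ring R] (e f : R)
    (he : ∀ r : R, InJac (e * r * (1 - e))) (hf : ∀ r : R, InJac (f * r * (1 - f))) :
    (∀ r : R, InJac ((e + f - e * f) * r * (1 - (e + f - e * f)))) ∧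
    ∀ P : TwoSidedIdeal R, IsMaxTwoSided P → (e + f - e * f ∈ P ↔ e ∈ P ∧ f ∈ P) := by
  constructor
  · intro r
    have key : (e + f - e * f) * r * (1 - (e + f - e * f)) =
        (e * r * (1 - e)) * (1 - f) + (1 - e) * (f * (r * (1 - e)) * (1 - f)) := by
      noncomm_ring
    rw [key]
    exact ((he r).mul_right _).add ((hf (r * (1 - e))).mul_left _)
  · intro P hP
    constructor
    · intro hg
      have he1 : e ∈ P := by
        have key : e = e * (e + f - e * f) + (e * 1 * (1 - e)) * (1 - f) := by noncomm_ring
        rw [key]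
        exact P.add_mem (P.mul_mem_left _ _ hg)
          (P.mul_mem_right _ _ (jac_le_max hP (he 1)))
      refine ⟨he1, ?_⟩
      have key : f = (e + f - e * f) - e + e * f := by noncomm_ring
      rw [key]
      exact P.add_mem (P.sub_mem hg he1) (P.mul_mem_right _ _ he1)
    · rintro ⟨h1, h2⟩
      exact P.sub_mem (P.add_mem h1 h2) (P.mul_mem_left _ _ h2)
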